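/- arXiv:2509.23283 — 2 statements merged into one kernel-verified Lean document; each statement's English description precedes it below -/
import Mathlib

section
/- The natural density of square-free positive integers is 6/π², i.e., the limit as N → ∞ of #{n ≤ N : n square-free}/N equals 6/π². -/
open Filter Topology Real Finset
open scoped ArithmeticFunction.Moebius ArithmeticFunction.zeta

lemma sq_dvd_iff {a b d : ℕ} (ha : Squarefree a) (hb : b ≠ 0) :
    d ^ 2 ∣ b ^ 2 * a ↔ d ∣ b := by
  have ha0 : a ≠ 0 := ha.ne_zero
  constructor
  · intro h
    rcases eq_or_ne d 0 with rfl | hd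
    · simp at h
      tauto
    rw [← Nat.factorization_le_iff_dvd (pow_ne_zero 2 hd) (by positivity)] at h
    rw [← Nat.factorization_le_iff_dvd hd hb]
    intro p
    have h1 := h p
    have h2 := (Nat.squarefree_iff_factorization_le_one ha0).mp ha p
    simp [Nat.factorization_mul (pow_ne_zero 2 hb) ha0, Nat.factorization_pow] at h1
    omega
  · intro h
    exact dvd_mul_of_dvd_left (pow_dvd_pow_of_dvd h 2) a

open ArithmeticFunction in
lemma moebius_sum_divisors (b : ℕ) :
    ∑ d ∈ b.divisors, μ d = if b = 1 then 1 else 0 := by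
  have h : (↑ζ * μ : ArithmeticFunction ℤ) b = (1 : ArithmeticFunction ℤ) b := by
    rw [ArithmeticFunction.coe_zeta_mul_moebius]
  rwa [ArithmeticFunction.coe_zeta_mul_apply, ArithmeticFunction.one_apply] at h

open ArithmeticFunction in
lemma indicator_eq {N n : ℕ} (hn : n ∈ Finset.Icc 1 N) :
    ∑ d ∈ Finset.Icc 1 N, (if d ^ 2 ∣ n then (μ d : ℤ) else 0) =
      if Squarefree n then 1 else 0 := by
  simp only [Finset.mem_Icc] at hn
  have hn0 : n ≠ 0 := by omega
  obtain ⟨a, b, hab, ha⟩ := Nat.sq_mul_squarefree n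
  have ha0 : 0 < a := Nat.pos_of_ne_zero ha.ne_zero
  have hb0 : b ≠ 0 := by rintro rfl; simp at hab; omega
  have hb1 : 0 < b := Nat.pos_of_ne_zero hb0
  have hfe : (Finset.Icc 1 N).filter (fun d => d ^ 2 ∣ n) = b.divisors := by
    ext d
    simp only [Finset.mem_filter, Finset.mem_Icc, Nat.mem_divisors, ← hab,
      sq_dvd_iff ha hb0]
    constructor
    · tauto
    · intro ⟨hd, _⟩
      have hd0 : d ≠ 0 := fun h => hb0 (by simpa [h] using hd)
      have hdb : d ≤ b := Nat.le_of_dvd hb1 hd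
      have hbn : b ≤ b ^ 2 * a := by nlinarith
      exact ⟨⟨by omega, by omega⟩, hd⟩
  have hsf : Squarefree n ↔ b = 1 := by
    constructor
    · intro h
      have hbb : b * b ∣ n := by rw [← hab]; exact Dvd.intro a (by ring)
      exact Nat.isUnit_iff.mp (h b hbb)
    · rintro rfl; rw [← hab]; simpa using ha
  rw [← Finset.sum_filter, hfe, moebius_sum_divisors]
  simp [hsf]

open ArithmeticFunction in
lemma count_eq (N : ℕ) :
    (((Finset.Icc 1 N).filter (fun n => Squarefree n)).card : ℤ) =
    ∑ d ∈ Finset.Icc 1 N, (μ d : ℤ) * ((N / d ^ 2 : ℕ) : ℤ) := by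
  have h1 : (((Finset.Icc 1 N).filter (fun n => Squarefree n)).card : ℤ) =
      ∑ n ∈ Finset.Icc 1 N, (if Squarefree n then (1 : ℤ) else 0) := by
    rw [Finset.card_filter]
    push_cast
    simp
  rw [h1, Finset.sum_congr rfl (fun n hn => (indicator_eq hn).symm), Finset.sum_comm]
  refine Finset.sum_congr rfl fun d _ => ?_
  rw [← Finset.sum_filter, Finset.sum_const, ← Nat.Ioc_filter_dvd_card_eq_div N (d ^ 2)]
  have : Finset.Icc 1 N = Finset.Ioc 0 N := rfl
  rw [this]
  simp [mul_comm]

open ArithmeticFunction in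
lemma tsum_moebius_div_sq : ∑' d : ℕ, ((μ d : ℝ) / (d : ℝ) ^ 2) = 6 / π ^ 2 := by
  have h2 : (1 : ℝ) < (2 : ℂ).re := by norm_num
  have hmul := LSeries_zeta_mul_Lseries_moebius h2
  rw [LSeries_zeta_eq_riemannZeta h2, riemannZeta_two] at hmul
  have hpi : (π : ℂ) ≠ 0 := by exact_mod_cast Real.pi_ne_zero
  have hL : LSeries (fun n => ((μ n : ℤ) : ℂ)) 2 = 6 / (π : ℂ) ^ 2 := by
    field_simp at hmul ⊢
    linear_combination hmul
  have hterm : ∀ n : ℕ, LSeries.term (fun n => ((μ n : ℤ) : ℂ)) 2 n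
      = (((μ n : ℝ) / (n : ℝ) ^ 2 : ℝ) : ℂ) := by
    intro n
    rcases eq_or_ne n 0 with rfl | hn
    · simp [LSeries.term_zero]
    · rw [LSeries.term_of_ne_zero hn]
      have : (n : ℂ) ^ (2 : ℂ) = (n : ℂ) ^ (2 : ℕ) := by
        rw [show (2 : ℂ) = ((2 : ℕ) : ℂ) by norm_num, Complex.cpow_natCast]
      rw [this]
      push_cast
      ring
  rw [LSeries, tsum_congr hterm, ← Complex.ofReal_tsum] at hL
  have h6 : ((6 / π ^ 2 : ℝ) : ℂ) = 6 / (π : ℂ) ^ 2 := by push_cast; ring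
  exact Complex.ofReal_injective (hL.trans h6.symm)

lemma ratio_tendsto (d : ℕ) (hd : d ≠ 0) :
    Tendsto (fun N : ℕ => ((N / d ^ 2 : ℕ) : ℝ) / (N : ℝ)) atTop (𝓝 (1 / (d : ℝ) ^ 2)) := by
  have hd2 : (0 : ℝ) < (d : ℝ) ^ 2 := by positivity
  have hlow : Tendsto (fun N : ℕ => 1 / (d : ℝ) ^ 2 - 1 / (N : ℝ)) atTop
      (𝓝 (1 / (d : ℝ) ^ 2)) := by
    have h0 := tendsto_one_div_atTop_nhds_zero_nat (𝕜 := ℝ)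
    have := (tendsto_const_nhds (x := 1 / (d : ℝ) ^ 2) (f := atTop (α := ℕ))).sub h0
    simpa using this
  refine tendsto_of_tendsto_of_tendsto_of_le_of_le' hlow tendsto_const_nhds ?_ ?_
  · filter_upwards [eventually_ge_atTop 1] with N hN
    have hN0 : (0 : ℝ) < (N : ℝ) := by exact_mod_cast hN
    have hmod : d ^ 2 * (N / d ^ 2) + N % d ^ 2 = N := Nat.div_add_mod N (d ^ 2)
    have hcast : ((d ^ 2 * (N / d ^ 2) + N % d ^ 2 : ℕ) : ℝ) = (N : ℝ) := by
      exact_mod_cast hmod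
    push_cast at hcast
    have hltR : ((N % d ^ 2 : ℕ) : ℝ) < (d : ℝ) ^ 2 := by
      exact_mod_cast Nat.mod_lt N (show 0 < d ^ 2 by positivity)
    rw [le_div_iff₀ hN0]
    have key : (N : ℝ) / (d : ℝ) ^ 2 - 1 ≤ ((N / d ^ 2 : ℕ) : ℝ) := by
      rw [sub_le_iff_le_add, div_le_iff₀ hd2]
      nlinarith
    have expand : (1 / (d : ℝ) ^ 2 - 1 / (N : ℝ)) * (N : ℝ)
        = (N : ℝ) / (d : ℝ) ^ 2 - 1 := by
      field_simp
    rw [expand]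
    exact key
  · filter_upwards [eventually_ge_atTop 1] with N hN
    have hN0 : (0 : ℝ) < (N : ℝ) := by exact_mod_cast hN
    have h : ((N / d ^ 2 : ℕ) : ℝ) ≤ (N : ℝ) / ((d : ℝ) ^ 2) := by
      have := Nat.cast_div_le (α := ℝ) (m := N) (n := d ^ 2)
      push_cast at this
      exact this
    calc ((N / d ^ 2 : ℕ) : ℝ) / N ≤ ((N : ℝ) / (d : ℝ) ^ 2) / N :=
          by gcongr
        _ = 1 / (d : ℝ) ^ 2 := by field_simp

open ArithmeticFunction in
lemma ratio_le (N d : ℕ) (hN : 1 ≤ N) :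
    ((N / d ^ 2 : ℕ) : ℝ) / (N : ℝ) ≤ 1 / (d : ℝ) ^ 2 := by
  rcases eq_or_ne d 0 with rfl | hd
  · simp
  have hN0 : (0 : ℝ) < (N : ℝ) := by exact_mod_cast hN
  have h : ((N / d ^ 2 : ℕ) : ℝ) ≤ (N : ℝ) / ((d : ℝ) ^ 2) := by
    have := Nat.cast_div_le (α := ℝ) (m := N) (n := d ^ 2)
    push_cast at this
    exact this
  have hd2 : (0 : ℝ) < (d : ℝ) ^ 2 := by positivity
  calc ((N / d ^ 2 : ℕ) : ℝ) / N ≤ ((N : ℝ) / (d : ℝ) ^ 2) / N := by gcongr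
    _ = 1 / (d : ℝ) ^ 2 := by field_simp

open ArithmeticFunction in
/-- The natural density of square-free positive integers is `6/π²`. -/
theorem squarefree_density :
    Tendsto (fun N : ℕ =>
        (((Finset.Icc 1 N).filter (fun n => Squarefree n)).card : ℝ) / (N : ℝ))
      atTop (𝓝 (6 / Real.pi ^ 2)) := by
  have key : Tendsto (fun N : ℕ => ∑' d : ℕ, ((μ d : ℝ) * ((N / d ^ 2 : ℕ) : ℝ) / (N : ℝ)))
      atTop (𝓝 (∑' d : ℕ, (μ d : ℝ) / (d : ℝ) ^ 2)) := by
    apply tendsto_tsum_of_dominated_convergence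
      (bound := fun d : ℕ => 1 / (d : ℝ) ^ 2)
    · exact Real.summable_one_div_nat_pow.mpr one_lt_two
    · intro d
      rcases eq_or_ne d 0 with rfl | hd
      · simp
      · have h := (ratio_tendsto d hd).const_mul ((μ d : ℝ))
        simp only [mul_one_div] at h
        refine h.congr fun N => by ring
    · filter_upwards [eventually_ge_atTop 1] with N hN d
      rcases eq_or_ne d 0 with rfl | hd
      · simp
      have h1 : |(μ d : ℝ)| ≤ 1 := by
        exact_mod_cast (abs_moebius_le_one (n := d))
      have h2 : ((N / d ^ 2 : ℕ) : ℝ) / (N : ℝ) ≤ 1 / (d : ℝ) ^ 2 := ratio_le N d hN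
      have h3 : (0 : ℝ) ≤ ((N / d ^ 2 : ℕ) : ℝ) / (N : ℝ) := by positivity
      calc ‖(μ d : ℝ) * ((N / d ^ 2 : ℕ) : ℝ) / (N : ℝ)‖
          = |(μ d : ℝ)| * (((N / d ^ 2 : ℕ) : ℝ) / (N : ℝ)) := by
            rw [Real.norm_eq_abs, mul_div_assoc, abs_mul, abs_of_nonneg h3]
        _ ≤ 1 * (1 / (d : ℝ) ^ 2) := mul_le_mul h1 h2 h3 zero_le_one
        _ = 1 / (d : ℝ) ^ 2 := one_mul _
  rw [tsum_moebius_div_sq] at key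
  refine key.congr' ?_
  filter_upwards [eventually_ge_atTop 1] with N hN
  have hsum : ∑' d : ℕ, ((μ d : ℝ) * ((N / d ^ 2 : ℕ) : ℝ) / (N : ℝ))
      = ∑ d ∈ Finset.Icc 1 N, ((μ d : ℝ) * ((N / d ^ 2 : ℕ) : ℝ) / (N : ℝ)) := by
    apply tsum_eq_sum
    intro d hd
    rcases eq_or_ne d 0 with rfl | hd0
    · simp
    have hdN : N < d := by
      simp only [Finset.mem_Icc, not_and, not_le] at hd
      omega
    have : N / d ^ 2 = 0 := Nat.div_eq_of_lt (by nlinarith)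
    simp [this]
  rw [hsum]
  have hc := count_eq N
  have hcR := congrArg (fun z : ℤ => (z : ℝ)) hc
  simp only [Int.cast_natCast, Int.cast_sum, Int.cast_mul] at hcR
  rw [hcR, Finset.sum_div]
end

section
/- Let Λ = λ·⟨1, τ⟩ ⊂ ℂ be a lattice with λ ∈ ℂ*, Im(τ) > 0, and let Λ' be a lattice containing Λ with index p (p prime). Then either Λ' = (λ/p)·⟨1, pτ⟩, or Λ' = λ·⟨1, (τ+k)/p⟩ for some k ∈ {0, 1, …, p−1}. -/
/-- If `Λ = λ·⟨1, τ⟩` with `λ ≠ 0`, `Im τ > 0`, and `Λ'` is a lattice containing `Λ`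
with index `p` (prime), then `Λ' = (λ/p)·⟨1, pτ⟩` or `Λ' = λ·⟨1, (τ+k)/p⟩` for some
`0 ≤ k < p`. -/
theorem sublattice_index_p_classification (p : ℕ) (hp : p.Prime)
    (lam τ : ℂ) (hlam : lam ≠ 0) (hτ : 0 < τ.im) (Λ' : AddSubgroup ℂ)
    (hle : AddSubgroup.closure {lam, lam * τ} ≤ Λ')
    (hidx : (AddSubgroup.closure {lam, lam * τ}).relIndex Λ' = p) :
    Λ' = AddSubgroup.closure {lam / p, lam * τ} ∨
      ∃ k : ℕ, k < p ∧ Λ' = AddSubgroup.closure {lam, lam * (τ + k) / p} := by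
  set Λ := AddSubgroup.closure {lam, lam * τ} with hΛ
  have hp0 : (p:ℂ) ≠ 0 := Nat.cast_ne_zero.2 hp.ne_zero
  have hpZ : Prime (p:ℤ) := Int.prime_iff_natAbs_prime.2 (by simpa using hp)
  have hmem : ∀ z : ℂ, z ∈ Λ ↔ ∃ m n : ℤ, (m:ℂ) * lam + n * (lam*τ) = z := by
    intro z
    rw [hΛ, AddSubgroup.mem_closure_pair]
    simp_rw [zsmul_eq_mul]
  have smulmem : ∀ (S : AddSubgroup ℂ) (n : ℤ) (x : ℂ), x ∈ S → (n:ℂ) * x ∈ S := by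
    intro S n x hx
    simpa [zsmul_eq_mul] using S.zsmul_mem hx n
  have hidx' : (Λ.addSubgroupOf Λ').index = p := hidx
  -- p • x ∈ Λ for x ∈ Λ'
  have hpmem : ∀ x ∈ Λ', (p:ℂ) * x ∈ Λ := by
    intro x hx
    have h1 := (Λ.addSubgroupOf Λ').nsmul_index_mem ⟨x, hx⟩
    rw [hidx', AddSubgroup.mem_addSubgroupOf] at h1
    simpa [nsmul_eq_mul] using h1
  -- find v ∈ Λ' \ Λ
  obtain ⟨v', hv'⟩ : ∃ v' : Λ', v' ∉ Λ.addSubgroupOf Λ' := by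
    by_contra h
    push_neg at h
    have : (Λ.addSubgroupOf Λ').index = 1 :=
      AddSubgroup.index_eq_one.2 ((AddSubgroup.eq_top_iff' _).2 h)
    rw [hidx'] at this
    exact hp.one_lt.ne' this
  set v : ℂ := (v' : ℂ) with hv
  have hvΛ' : v ∈ Λ' := v'.2
  have hvΛ : v ∉ Λ := by
    intro h
    exact hv' ((AddSubgroup.mem_addSubgroupOf).2 h)
  -- quotient facts
  have hcard : Nat.card (Λ' ⧸ Λ.addSubgroupOf Λ') = p := by
    rw [← AddSubgroup.index_eq_card]; exact hidx'
  set vq : Λ' ⧸ Λ.addSubgroupOf Λ' := QuotientAddGroup.mk v' with hvq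
  have hvq0 : vq ≠ 0 := by
    simpa [hvq, QuotientAddGroup.eq_zero_iff] using hv'
  have hord : addOrderOf vq = p := by
    have h1 : addOrderOf vq ∣ p := hcard ▸ addOrderOf_dvd_natCard vq
    rcases hp.eq_one_or_self_of_dvd _ h1 with h | h
    · exact absurd (AddMonoid.addOrderOf_eq_one_iff.1 h) hvq0
    · exact h
  have hfin : Finite (Λ' ⧸ Λ.addSubgroupOf Λ') :=
    Nat.finite_of_card_ne_zero (by rw [hcard]; exact hp.ne_zero)
  have htop : AddSubgroup.zmultiples vq = ⊤ := by
    apply AddSubgroup.eq_top_of_card_eq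
    rw [Nat.card_zmultiples, hord, hcard]
  have hgen : ∀ x ∈ Λ', ∃ n : ℤ, x - (n:ℂ) * v ∈ Λ := by
    intro x hx
    have h1 : (QuotientAddGroup.mk ⟨x, hx⟩ : Λ' ⧸ Λ.addSubgroupOf Λ')
        ∈ AddSubgroup.zmultiples vq := htop ▸ AddSubgroup.mem_top _
    obtain ⟨n, hn⟩ := (AddSubgroup.mem_zmultiples_iff).1 h1
    refine ⟨n, ?_⟩
    have h2 : ((⟨x, hx⟩ - n • v' : Λ') : ℂ) ∈ Λ := by
      rw [← AddSubgroup.mem_addSubgroupOf]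
      rw [← QuotientAddGroup.eq_zero_iff]
      have : (QuotientAddGroup.mk (⟨x, hx⟩ - n • v' : Λ') :
          Λ' ⧸ Λ.addSubgroupOf Λ') = QuotientAddGroup.mk ⟨x, hx⟩ - n • vq := by
        simp [hvq, QuotientAddGroup.mk_sub, QuotientAddGroup.mk_zsmul]
      rw [this, ← hn, sub_self]
    simpa [zsmul_eq_mul] using h2
  -- p v ∈ Λ
  obtain ⟨a, b, hab⟩ := (hmem _).1 (hpmem v hvΛ')
  by_cases hb : (p:ℤ) ∣ b
  · -- case Λ' = ⟨lam/p, lam τ⟩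
    obtain ⟨b', rfl⟩ := hb
    left
    set T := AddSubgroup.closure {lam / p, lam * τ} with hT
    have hmemT : ∀ z : ℂ, z ∈ T ↔ ∃ m n : ℤ, (m:ℂ) * (lam/p) + n * (lam*τ) = z := by
      intro z
      rw [hT, AddSubgroup.mem_closure_pair]
      simp_rw [zsmul_eq_mul]
    have ha : ¬ (p:ℤ) ∣ a := by
      rintro ⟨a', rfl⟩
      apply hvΛ
      refine (hmem v).2 ⟨a', b', ?_⟩
      apply mul_left_cancel₀ hp0
      push_cast at hab ⊢
      linear_combination hab
    obtain ⟨d, c, hdc⟩ : IsCoprime (p:ℤ) a := (hpZ.coprime_iff_not_dvd).2 ha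
    have hlamT : lam ∈ T := (hmemT lam).2 ⟨p, 0, by field_simp; simp⟩
    have hltT : lam * τ ∈ T := (hmemT _).2 ⟨0, 1, by push_cast; ring⟩
    have hvT : v ∈ T := by
      refine (hmemT v).2 ⟨a, b', ?_⟩
      apply mul_left_cancel₀ hp0
      push_cast at hab ⊢
      field_simp
      linear_combination hab
    have hΛT : Λ ≤ T := by
      rw [hΛ]
      refine AddSubgroup.closure_le _ |>.2 ?_
      rintro z (rfl | rfl)
      · exact hlamT
      · exact hltT
    have hwΛ' : lam / p ∈ Λ' := by
      have heq : lam / p = (c:ℂ) * v + (d:ℂ) * lam + (-(c*b') : ℤ) * (lam*τ) := by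
        have hdcC : (d:ℂ) * p + c * a = 1 := by exact_mod_cast hdc
        rw [div_eq_iff hp0]
        push_cast at hab ⊢
        linear_combination (c:ℂ) * hab - lam * hdcC
      rw [heq]
      exact AddSubgroup.add_mem _ (AddSubgroup.add_mem _ (smulmem _ c v hvΛ')
        (smulmem _ d lam (hle (AddSubgroup.subset_closure (by simp)))))
        (smulmem _ _ _ (hle (AddSubgroup.subset_closure (by simp))))
    apply le_antisymm
    · intro x hx
      obtain ⟨n, hn⟩ := hgen x hx
      have : x = (x - (n:ℂ) * v) + (n:ℂ) * v := by ring
      rw [this]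
      exact AddSubgroup.add_mem _ (hΛT hn) (smulmem _ n v hvT)
    · rw [hT]
      refine AddSubgroup.closure_le _ |>.2 ?_
      rintro z (rfl | rfl)
      · exact hwΛ'
      · exact hle (AddSubgroup.subset_closure (by simp))
  · -- case Λ' = ⟨lam, lam (τ+k)/p⟩
    right
    obtain ⟨d, c, hdc⟩ : IsCoprime (p:ℤ) b := (hpZ.coprime_iff_not_dvd).2 hb
    set K : ℤ := (a * c) % p with hK
    have hppos : (0:ℤ) < p := by exact_mod_cast hp.pos
    have hK0 : 0 ≤ K := Int.emod_nonneg _ (ne_of_gt hppos)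
    have hKp : K < p := Int.emod_lt_of_pos _ hppos
    refine ⟨K.toNat, ?_, ?_⟩
    · omega
    have hkc : ((K.toNat : ℕ) : ℂ) = (K : ℂ) := by
      have h1 : ((K.toNat : ℤ) : ℂ) = (K:ℂ) := by rw [Int.toNat_of_nonneg hK0]
      exact_mod_cast h1
    set T := AddSubgroup.closure {lam, lam * (τ + (K.toNat : ℕ)) / p} with hT
    have hgenT : lam * (τ + (K.toNat : ℕ)) / p = lam * (τ + (K:ℂ)) / p := by rw [hkc]
    have hmemT : ∀ z : ℂ, z ∈ T ↔
        ∃ m n : ℤ, (m:ℂ) * lam + n * (lam * (τ + (K:ℂ)) / p) = z := by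
      intro z
      rw [hT, AddSubgroup.mem_closure_pair]
      simp_rw [zsmul_eq_mul, hgenT]
    -- divisibilities
    obtain ⟨e, he⟩ : (p:ℤ) ∣ (a * c - K) := ⟨a * c / p, by rw [hK, Int.emod_def]; ring⟩
    obtain ⟨f, hf⟩ : (p:ℤ) ∣ (c * b - 1) := ⟨-d, by linear_combination hdc⟩
    obtain ⟨g, hg⟩ : (p:ℤ) ∣ (a - b * K) := by
      exact ⟨a * d + b * e, by linear_combination b * he - a * hdc⟩
    -- memberships in T
    have hlamT : lam ∈ T := (hmemT lam).2 ⟨1, 0, by push_cast; ring⟩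
    have hwT : lam * (τ + (K:ℂ)) / p ∈ T := (hmemT _).2 ⟨0, 1, by push_cast; ring⟩
    have hltT : lam * τ ∈ T := by
      refine (hmemT _).2 ⟨-K, p, ?_⟩
      push_cast
      field_simp
      ring
    have hvT : v ∈ T := by
      refine (hmemT v).2 ⟨g, b, ?_⟩
      have hgC : (a:ℂ) - b * K = p * g := by exact_mod_cast congrArg (Int.cast : ℤ → ℂ) hg
      push_cast at hab ⊢
      field_simp
      linear_combination hab - lam * hgC
    have hΛT : Λ ≤ T := by
      rw [hΛ]
      refine AddSubgroup.closure_le _ |>.2 ?_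
      rintro z (rfl | rfl)
      · exact hlamT
      · exact hltT
    have hwΛ' : lam * (τ + (K.toNat : ℕ)) / p ∈ Λ' := by
      rw [hgenT]
      have heC : (a:ℂ) * c - K = p * e := by exact_mod_cast congrArg (Int.cast : ℤ → ℂ) he
      have hfC : (c:ℂ) * b - 1 = p * f := by exact_mod_cast congrArg (Int.cast : ℤ → ℂ) hf
      have heq : lam * (τ + (K:ℂ)) / p =
          (c:ℂ) * v + ((-e : ℤ) : ℂ) * lam + ((-f : ℤ) : ℂ) * (lam * τ) := by
        rw [div_eq_iff hp0]
        push_cast at hab ⊢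
        linear_combination (c:ℂ) * hab - lam * heC - (lam * τ) * hfC
      rw [heq]
      exact AddSubgroup.add_mem _ (AddSubgroup.add_mem _ (smulmem _ c v hvΛ')
        (smulmem _ (-e) lam (hle (AddSubgroup.subset_closure (by simp)))))
        (smulmem _ (-f) _ (hle (AddSubgroup.subset_closure (by simp))))
    apply le_antisymm
    · intro x hx
      obtain ⟨n, hn⟩ := hgen x hx
      have : x = (x - (n:ℂ) * v) + (n:ℂ) * v := by ring
      rw [this]
      exact AddSubgroup.add_mem _ (hΛT hn) (smulmem _ n v hvT)
    · rw [hT]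
      refine AddSubgroup.closure_le _ |>.2 ?_
      rintro z (rfl | rfl)
      · exact hle (AddSubgroup.subset_closure (by simp))
      · exact hwΛ'
end
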